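/- The class E* is closed under group extension: if G is a totally disconnected locally compact Hausdorff group with a closed normal subgroup H such that H ∈ E* and G/H ∈ E*, then G ∈ E*. -/

import Mathlib

universe u

/-- A profinite group: compact, totally disconnected and Hausdorff. -/
def IsProfiniteGrp (G : Type u) [TopologicalSpace G] : Prop :=
  CompactSpace G ∧ TotallyDisconnectedSpace G ∧ T2Space G

/-- A topological group is compactly generated if it is generated by a compact subset. -/
def CompactlyGeneratedGrp (G : Type u) [Group G] [TopologicalSpace G] : Prop :=
  ∃ K : Set G, IsCompact K ∧ Subgroup.closure K = ⊤

/-- The class `E*`: the smallest class of t.d.l.c. groups containing profinite and discrete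
groups, closed under extensions with profinite or discrete quotient, and closed under
directed unions of open subgroups. -/
inductive IsEStar : ∀ (G : Type u) [Group G] [TopologicalSpace G], Prop
  | profinite (G : Type u) [Group G] [TopologicalSpace G] [IsTopologicalGroup G]
      (h : IsProfiniteGrp G) : IsEStar G
  | discrete (G : Type u) [Group G] [TopologicalSpace G] [IsTopologicalGroup G]
      [DiscreteTopology G] : IsEStar G
  | extension (G : Type u) [Group G] [TopologicalSpace G] [IsTopologicalGroup G]
      (N : Subgroup G) [N.Normal] (hN : IsClosed (N : Set G))
      (hNE : IsEStar N)
      (hQ : IsProfiniteGrp (G ⧸ N) ∨ DiscreteTopology (G ⧸ N)) : IsEStar G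
  | directedUnion (G : Type u) [Group G] [TopologicalSpace G] [IsTopologicalGroup G]
      {ι : Type u} (O : ι → Subgroup G)
      (hdir : Directed (· ≤ ·) O)
      (hopen : ∀ i, IsOpen (O i : Set G))
      (hmem : ∀ i, IsEStar (O i))
      (hcover : ∀ g : G, ∃ i, g ∈ O i) : IsEStar G

open Function

section Helpers

set_option linter.unusedSectionVars false

variable {A : Type u} {B : Type u} [Group A] [TopologicalSpace A] [Group B] [TopologicalSpace B]

theorem isProfiniteGrp_congr (h : A ≃ₜ B) (hA : IsProfiniteGrp A) : IsProfiniteGrp B := by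
  obtain ⟨h1, h2, h3⟩ := hA
  refine ⟨h.compactSpace, ?_, h.t2Space⟩
  rw [← h.symm.isEmbedding.isTotallyDisconnected_range]
  exact isTotallyDisconnected_of_totallyDisconnectedSpace _

theorem discreteTopology_congr (h : A ≃ₜ B) (hA : DiscreteTopology A) : DiscreteTopology B :=
  h.symm.isEmbedding.discreteTopology

/-- From a continuous open surjective hom, a topological iso from the quotient by the kernel. -/
theorem exists_quotEquiv [IsTopologicalGroup A] (φ : A →* B) (N : Subgroup A) [N.Normal]
    (hker : φ.ker = N) (hc : Continuous φ) (ho : IsOpenMap φ) (hs : Surjective φ) :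
    ∃ e : A ⧸ N ≃* B, Continuous e ∧ Continuous e.symm := by
  subst hker
  let e := QuotientGroup.quotientKerEquivOfSurjective φ hs
  have hec : Continuous e := by
    rw [continuous_coinduced_dom]
    exact hc
  have heo : IsOpenMap e := by
    intro U hU
    have : ⇑e '' U = φ '' ((QuotientGroup.mk : A → A ⧸ φ.ker) ⁻¹' U) := by
      ext b
      constructor
      · rintro ⟨x, hx, rfl⟩
        obtain ⟨a, rfl⟩ := QuotientGroup.mk_surjective x
        exact ⟨a, hx, rfl⟩
      · rintro ⟨a, ha, rfl⟩
        exact ⟨QuotientGroup.mk a, ha, rfl⟩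
    rw [this]
    exact ho _ (hU.preimage QuotientGroup.continuous_mk)
  refine ⟨e, hec, ?_⟩
  rw [continuous_def]
  intro U hU
  have himg : ⇑e.symm ⁻¹' U = ⇑e '' U := by
    ext b
    constructor
    · intro hb
      exact ⟨e.symm b, hb, e.apply_symm_apply b⟩
    · rintro ⟨a, ha, rfl⟩
      rwa [Set.mem_preimage, e.symm_apply_apply]
  rw [himg]
  exact heo U hU

/-- Facts about the restriction of a continuous open surjective hom to the preimage
of a subgroup. -/
theorem subgroupComap_facts (ψ : A →* B) (hc : Continuous ψ) (ho : IsOpenMap ψ)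
    (hs : Surjective ψ) (K : Subgroup B) :
    Continuous (ψ.subgroupComap K) ∧ IsOpenMap (ψ.subgroupComap K) ∧
      Surjective (ψ.subgroupComap K) ∧
      (ψ.subgroupComap K).ker = ψ.ker.subgroupOf (K.comap ψ) := by
  refine ⟨?_, ?_, ?_, ?_⟩
  · exact Continuous.subtype_mk (hc.comp continuous_subtype_val) _
  · intro U hU
    rw [isOpen_induced_iff] at hU
    obtain ⟨V, hV, rfl⟩ := hU
    rw [isOpen_induced_iff]
    refine ⟨ψ '' V, ho V hV, ?_⟩
    ext k
    simp only [Set.mem_preimage, Set.mem_image]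
    constructor
    · rintro ⟨v, hv, hvk⟩
      have hvM : v ∈ K.comap ψ := by
        rw [Subgroup.mem_comap, hvk]
        exact k.2
      exact ⟨⟨v, hvM⟩, hv, Subtype.ext hvk⟩
    · rintro ⟨⟨v, hvM⟩, hv, rfl⟩
      exact ⟨v, hv, rfl⟩
  · rintro ⟨k, hk⟩
    obtain ⟨g, rfl⟩ := hs k
    exact ⟨⟨g, hk⟩, rfl⟩
  · ext x
    simp only [MonoidHom.mem_ker, Subgroup.mem_subgroupOf]
    rw [Subtype.ext_iff]
    rfl

end Helpers

/-- `E*` is invariant under topological group isomorphism. -/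
theorem IsEStar.congr : ∀ {A : Type u} [Group A] [TopologicalSpace A],
    IsEStar A → ∀ {B : Type u} [Group B] [TopologicalSpace B] [IsTopologicalGroup B]
    (e : A ≃* B), Continuous e → Continuous e.symm → IsEStar B := by
  intro A _ _ h
  induction h with
  | profinite G hp =>
    intro B _ _ _ e hc hc'
    exact IsEStar.profinite B (isProfiniteGrp_congr ⟨e.toEquiv, hc, hc'⟩ hp)
  | discrete G =>
    intro B _ _ _ e hc hc'
    haveI := discreteTopology_congr (⟨e.toEquiv, hc, hc'⟩ : G ≃ₜ B) ‹_›
    exact IsEStar.discrete B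
  | extension G N hNclosed hNE hQ IH =>
    intro B _ _ _ e hc hc'
    set N' := N.map e.toMonoidHom with hN'def
    haveI hN'norm : N'.Normal := Subgroup.Normal.map ‹N.Normal› e.toMonoidHom e.surjective
    have hcoe : (N' : Set B) = ⇑e.symm ⁻¹' (N : Set G) := by
      ext b
      simp only [hN'def, Subgroup.coe_map, Set.mem_image, Set.mem_preimage, SetLike.mem_coe,
        MulEquiv.coe_toMonoidHom]
      constructor
      · rintro ⟨a, ha, rfl⟩
        rwa [e.symm_apply_apply]
      · intro hb
        exact ⟨e.symm b, hb, e.apply_symm_apply b⟩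
    have hN'closed : IsClosed (N' : Set B) := by
      rw [hcoe]; exact hNclosed.preimage hc'
    have hN'E : IsEStar N' := by
      refine IH (e.subgroupMap N) ?_ ?_
      · exact Continuous.subtype_mk (hc.comp continuous_subtype_val) _
      · exact Continuous.subtype_mk (hc'.comp continuous_subtype_val) _
    -- the quotient B ⧸ N' is topologically isomorphic to G ⧸ N
    have hker : ((QuotientGroup.mk' N).comp e.symm.toMonoidHom).ker = N' := by
      rw [← MonoidHom.comap_ker, QuotientGroup.ker_mk', hN'def,
        Subgroup.map_equiv_eq_comap_symm']
    have hoe : IsOpenMap (⇑e.symm : B → G) := by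
      intro U hU
      have himg : ⇑e.symm '' U = ⇑e ⁻¹' U := by
        ext a
        constructor
        · rintro ⟨b, hb, rfl⟩
          rwa [Set.mem_preimage, e.apply_symm_apply]
        · intro ha
          exact ⟨e a, ha, e.symm_apply_apply a⟩
      rw [himg]
      exact hU.preimage hc
    obtain ⟨q, hqc, hqc'⟩ := exists_quotEquiv ((QuotientGroup.mk' N).comp e.symm.toMonoidHom)
      N' hker (QuotientGroup.continuous_mk.comp hc')
      (QuotientGroup.isOpenMap_coe.comp hoe)
      ((QuotientGroup.mk'_surjective N).comp e.symm.surjective)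
    exact IsEStar.extension B N' hN'closed hN'E
      (hQ.imp (isProfiniteGrp_congr ⟨q.symm.toEquiv, hqc', hqc⟩)
        (discreteTopology_congr ⟨q.symm.toEquiv, hqc', hqc⟩))
  | directedUnion G O hdir hopen hmem hcover IH =>
    intro B _ _ _ e hc hc'
    refine IsEStar.directedUnion B (fun i => (O i).map e.toMonoidHom)
      (fun i j => ?_) (fun i => ?_) (fun i => ?_) (fun b => ?_)
    · obtain ⟨k, hik, hjk⟩ := hdir i j
      exact ⟨k, Subgroup.map_mono hik, Subgroup.map_mono hjk⟩
    · have hcoe : ((O i).map e.toMonoidHom : Set B) = ⇑e.symm ⁻¹' (O i : Set G) := by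
        ext b
        simp only [Subgroup.coe_map, Set.mem_image, Set.mem_preimage, SetLike.mem_coe,
          MulEquiv.coe_toMonoidHom]
        constructor
        · rintro ⟨a, ha, rfl⟩
          rwa [e.symm_apply_apply]
        · intro hb
          exact ⟨e.symm b, hb, e.apply_symm_apply b⟩
      rw [hcoe]
      exact (hopen i).preimage hc'
    · refine IH i (e.subgroupMap (O i)) ?_ ?_
      · exact Continuous.subtype_mk (hc.comp continuous_subtype_val) _
      · exact Continuous.subtype_mk (hc'.comp continuous_subtype_val) _
    · obtain ⟨i, hi⟩ := hcover (e.symm b)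
      exact ⟨i, Subgroup.mem_map.2 ⟨e.symm b, hi, e.apply_symm_apply b⟩⟩

theorem IsEStar.key : ∀ {Q : Type u} [Group Q] [TopologicalSpace Q], IsEStar Q →
    ∀ (G : Type u) [Group G] [TopologicalSpace G] [IsTopologicalGroup G]
    (H : Subgroup G) [H.Normal], IsClosed (H : Set G) → IsEStar H →
    ∀ (ψ : G →* Q), Continuous ψ → IsOpenMap ψ → Surjective ψ → ψ.ker = H → IsEStar G := by
  intro Q _ _ hQ
  induction hQ with
  | profinite Q hp =>
    intro G _ _ _ H _ hHc hHE ψ hc ho hs hker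
    obtain ⟨q, hqc, hqc'⟩ := exists_quotEquiv ψ H hker hc ho hs
    exact IsEStar.extension G H hHc hHE
      (Or.inl (isProfiniteGrp_congr ⟨q.symm.toEquiv, hqc', hqc⟩ hp))
  | discrete Q =>
    intro G _ _ _ H _ hHc hHE ψ hc ho hs hker
    obtain ⟨q, hqc, hqc'⟩ := exists_quotEquiv ψ H hker hc ho hs
    exact IsEStar.extension G H hHc hHE
      (Or.inr (discreteTopology_congr ⟨q.symm.toEquiv, hqc', hqc⟩ ‹_›))
  | extension Q N hNc hNE hQN IH =>
    intro G _ _ _ H _ hHc hHE ψ hc ho hs hker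
    set M := N.comap ψ with hMdef
    have hMc : IsClosed (M : Set G) := hNc.preimage hc
    have hHM : H ≤ M := by
      rw [← hker]
      intro x hx
      rw [Subgroup.mem_comap, MonoidHom.mem_ker.mp hx]
      exact N.one_mem
    obtain ⟨hφc, hφo, hφs, hφker⟩ := subgroupComap_facts ψ hc ho hs N
    have hsubE : IsEStar (H.subgroupOf M) := by
      refine hHE.congr (Subgroup.subgroupOfEquivOfLe hHM).symm ?_ ?_
      · exact Continuous.subtype_mk (Continuous.subtype_mk continuous_subtype_val _) _
      · exact Continuous.subtype_mk (continuous_subtype_val.comp continuous_subtype_val) _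
    have hsubc : IsClosed ((H.subgroupOf M : Subgroup M) : Set M) := by
      rw [Subgroup.coe_subgroupOf]
      exact hHc.preimage continuous_subtype_val
    have hME : IsEStar M := by
      refine IH M (H.subgroupOf M) hsubc hsubE (ψ.subgroupComap N) hφc hφo hφs ?_
      rw [hφker, hker]
    have hker2 : ((QuotientGroup.mk' N).comp ψ).ker = M := by
      rw [← MonoidHom.comap_ker, QuotientGroup.ker_mk']
    obtain ⟨q, hqc, hqc'⟩ := exists_quotEquiv ((QuotientGroup.mk' N).comp ψ) M hker2
      (QuotientGroup.continuous_mk.comp hc) (QuotientGroup.isOpenMap_coe.comp ho)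
      ((QuotientGroup.mk'_surjective N).comp hs)
    exact IsEStar.extension G M hMc hME
      (hQN.imp (isProfiniteGrp_congr ⟨q.symm.toEquiv, hqc', hqc⟩)
        (discreteTopology_congr ⟨q.symm.toEquiv, hqc', hqc⟩))
  | directedUnion Q O hdir hopen hmem hcover IH =>
    intro G _ _ _ H _ hHc hHE ψ hc ho hs hker
    refine IsEStar.directedUnion G (fun i => (O i).comap ψ) (fun i j => ?_) (fun i => ?_)
      (fun i => ?_) (fun g => ?_)
    · obtain ⟨k, hik, hjk⟩ := hdir i j
      exact ⟨k, Subgroup.comap_mono hik, Subgroup.comap_mono hjk⟩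
    · exact (hopen i).preimage hc
    · have hHM : H ≤ (O i).comap ψ := by
        rw [← hker]
        intro x hx
        rw [Subgroup.mem_comap, MonoidHom.mem_ker.mp hx]
        exact (O i).one_mem
      obtain ⟨hφc, hφo, hφs, hφker⟩ := subgroupComap_facts ψ hc ho hs (O i)
      have hsubE : IsEStar (H.subgroupOf ((O i).comap ψ)) := by
        refine hHE.congr (Subgroup.subgroupOfEquivOfLe hHM).symm ?_ ?_
        · exact Continuous.subtype_mk (Continuous.subtype_mk continuous_subtype_val _) _
        · exact Continuous.subtype_mk (continuous_subtype_val.comp continuous_subtype_val) _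
      have hsubc : IsClosed ((H.subgroupOf ((O i).comap ψ)) : Set ((O i).comap ψ)) := by
        rw [Subgroup.coe_subgroupOf]
        exact hHc.preimage continuous_subtype_val
      refine IH i ((O i).comap ψ) (H.subgroupOf ((O i).comap ψ)) hsubc hsubE
        (ψ.subgroupComap (O i)) hφc hφo hφs ?_
      rw [hφker, hker]
    · obtain ⟨i, hi⟩ := hcover (ψ g)
      exact ⟨i, hi⟩

/-- `E*` is closed under group extension. -/
theorem IsEStar.of_extension (G : Type u) [Group G] [TopologicalSpace G]
    [IsTopologicalGroup G] [LocallyCompactSpace G] [TotallyDisconnectedSpace G] [T2Space G]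
    (H : Subgroup G) [H.Normal] (hH : IsClosed (H : Set G))
    (hHE : IsEStar H) (hQ : IsEStar (G ⧸ H)) :
    IsEStar G := by
  exact IsEStar.key hQ G H hH hHE (QuotientGroup.mk' H) QuotientGroup.continuous_mk
    QuotientGroup.isOpenMap_coe (QuotientGroup.mk'_surjective H) (QuotientGroup.ker_mk' H)
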